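/- Ward identity from Haar invariance: let A, B be N×N deterministic Hermitian matrices, U a Haar-distributed unitary matrix, H = A + UBU*, G(z) = (H - zI)⁻¹ its resolvent for Im z > 0, and B̃ = UBU*. Then for every fixed index j, E[(1/N) Tr(B̃ G(z)) · G(z)_{jj}] = E[(1/N) Tr G(z) · (B̃ G(z))_{jj}]. -/

import Mathlib

open Matrix MeasureTheory NormedSpace
open scoped Topology

/-- The Borel/pi measurable structure on matrices. -/
noncomputable instance matrixMeasurableSpace {N : ℕ} :
    MeasurableSpace (Matrix (Fin N) (Fin N) ℂ) :=
  inferInstanceAs (MeasurableSpace (Fin N → Fin N → ℂ))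

/-- The induced measurable structure on the unitary group. -/
noncomputable instance unitaryGroupMeasurableSpace {N : ℕ} :
    MeasurableSpace (Matrix.unitaryGroup (Fin N) ℂ) :=
  Subtype.instMeasurableSpace

/-- The conjugated matrix `B̃ = U B U*`. -/
noncomputable def conjByUnitary {N : ℕ} (B : Matrix (Fin N) (Fin N) ℂ)
    (U : Matrix.unitaryGroup (Fin N) ℂ) : Matrix (Fin N) (Fin N) ℂ :=
  (U : Matrix (Fin N) (Fin N) ℂ) * B * star (U : Matrix (Fin N) (Fin N) ℂ)

/-- The resolvent `G(z) = (A + U B U* - z I)⁻¹`. -/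
noncomputable def resolventFreeSum {N : ℕ} (A B : Matrix (Fin N) (Fin N) ℂ) (z : ℂ)
    (U : Matrix.unitaryGroup (Fin N) ℂ) : Matrix (Fin N) (Fin N) ℂ :=
  (A + conjByUnitary B U - z • 1)⁻¹



attribute [local instance] Matrix.linftyOpNormedRing Matrix.linftyOpNormedAlgebra
  Matrix.linftyOpNormedSpace

noncomputable instance matrixBorel {N : ℕ} :
    BorelSpace (Matrix (Fin N) (Fin N) ℂ) :=
  inferInstanceAs (BorelSpace (Fin N → Fin N → ℂ))

noncomputable instance unitaryBorel {N : ℕ} :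
    BorelSpace (Matrix.unitaryGroup (Fin N) ℂ) :=
  Subtype.borelSpace _

variable {N : ℕ}

/-- Explicit inverse of `M - z•1` for Hermitian `M`, nonreal `z`. -/
noncomputable def shiftInv {M : Matrix (Fin N) (Fin N) ℂ} (hM : M.IsHermitian) (z : ℂ) :
    Matrix (Fin N) (Fin N) ℂ :=
  (hM.eigenvectorUnitary : Matrix (Fin N) (Fin N) ℂ)
    * diagonal (fun i => ((hM.eigenvalues i : ℂ) - z)⁻¹)
    * star (hM.eigenvectorUnitary : Matrix (Fin N) (Fin N) ℂ)

lemma eig_sub_ne {M : Matrix (Fin N) (Fin N) ℂ} (hM : M.IsHermitian) {z : ℂ}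
    (hz : z.im ≠ 0) (i : Fin N) : ((hM.eigenvalues i : ℂ)) - z ≠ 0 := by
  intro h
  apply hz
  have := congrArg Complex.im h
  simpa using this.symm

lemma shift_decomp {M : Matrix (Fin N) (Fin N) ℂ} (hM : M.IsHermitian) (z : ℂ) :
    M - z • 1 = (hM.eigenvectorUnitary : Matrix (Fin N) (Fin N) ℂ)
      * diagonal (fun i => (hM.eigenvalues i : ℂ) - z)
      * star (hM.eigenvectorUnitary : Matrix (Fin N) (Fin N) ℂ) := by
  set V : Matrix (Fin N) (Fin N) ℂ := (hM.eigenvectorUnitary : Matrix (Fin N) (Fin N) ℂ)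
  have hVV : V * star V = 1 := (Matrix.mem_unitaryGroup_iff).mp hM.eigenvectorUnitary.2
  have h1 : M = V * diagonal (fun i => (hM.eigenvalues i : ℂ)) * star V := by
    simpa [Function.comp_def] using hM.spectral_theorem
  have h2 : (z • (1 : Matrix (Fin N) (Fin N) ℂ)) = V * diagonal (fun _ => z) * star V := by
    rw [← Matrix.smul_one_eq_diagonal]
    rw [Matrix.mul_smul, Matrix.smul_mul, mul_one, hVV]
  rw [← diagonal_sub]
  conv_lhs => rw [h1, h2]
  rw [Matrix.mul_sub, Matrix.sub_mul]

lemma shiftInv_mul {M : Matrix (Fin N) (Fin N) ℂ} (hM : M.IsHermitian) {z : ℂ}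
    (hz : z.im ≠ 0) : (M - z • 1) * shiftInv hM z = 1 := by
  set V : Matrix (Fin N) (Fin N) ℂ := (hM.eigenvectorUnitary : Matrix (Fin N) (Fin N) ℂ)
  have hVV : V * star V = 1 := (Matrix.mem_unitaryGroup_iff).mp hM.eigenvectorUnitary.2
  have hVV' : star V * V = 1 := (Matrix.mem_unitaryGroup_iff').mp hM.eigenvectorUnitary.2
  rw [shift_decomp hM z, shiftInv]
  have : ∀ (w w' : Fin N → ℂ),
      (V * diagonal w * star V) * (V * diagonal w' * star V) = V * diagonal (w * w') * star V := by
    intro w w'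
    simp only [Matrix.mul_assoc]
    rw [← Matrix.mul_assoc (star V) V (diagonal w' * star V), hVV', one_mul,
      ← Matrix.mul_assoc (diagonal w), diagonal_mul_diagonal]
    rfl
  rw [this]
  have hw : (fun i => (hM.eigenvalues i : ℂ) - z) * (fun i => ((hM.eigenvalues i : ℂ) - z)⁻¹)
      = fun _ => 1 := by
    funext i
    exact mul_inv_cancel₀ (eig_sub_ne hM hz i)
  rw [hw, diagonal_one, mul_one, hVV]

lemma mul_shiftInv {M : Matrix (Fin N) (Fin N) ℂ} (hM : M.IsHermitian) {z : ℂ}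
    (hz : z.im ≠ 0) : shiftInv hM z * (M - z • 1) = 1 := by
  set V : Matrix (Fin N) (Fin N) ℂ := (hM.eigenvectorUnitary : Matrix (Fin N) (Fin N) ℂ)
  have hVV : V * star V = 1 := (Matrix.mem_unitaryGroup_iff).mp hM.eigenvectorUnitary.2
  have hVV' : star V * V = 1 := (Matrix.mem_unitaryGroup_iff').mp hM.eigenvectorUnitary.2
  rw [shift_decomp hM z, shiftInv]
  have : ∀ (w w' : Fin N → ℂ),
      (V * diagonal w * star V) * (V * diagonal w' * star V) = V * diagonal (w * w') * star V := by
    intro w w'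
    simp only [Matrix.mul_assoc]
    rw [← Matrix.mul_assoc (star V) V (diagonal w' * star V), hVV', one_mul,
      ← Matrix.mul_assoc (diagonal w), diagonal_mul_diagonal]
    rfl
  rw [this]
  have hw : (fun i => ((hM.eigenvalues i : ℂ) - z)⁻¹) * (fun i => (hM.eigenvalues i : ℂ) - z)
      = fun _ => 1 := by
    funext i
    exact inv_mul_cancel₀ (eig_sub_ne hM hz i)
  rw [hw, diagonal_one, mul_one, hVV]

lemma isUnit_det_shift {M : Matrix (Fin N) (Fin N) ℂ} (hM : M.IsHermitian) {z : ℂ}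
    (hz : z.im ≠ 0) : IsUnit (M - z • 1).det := by
  have h := shiftInv_mul hM hz
  have := congrArg Matrix.det h
  rw [Matrix.det_mul, Matrix.det_one] at this
  exact IsUnit.of_mul_eq_one _ this

lemma inv_shift {M : Matrix (Fin N) (Fin N) ℂ} (hM : M.IsHermitian) {z : ℂ}
    (hz : z.im ≠ 0) : (M - z • 1)⁻¹ = shiftInv hM z :=
  Matrix.inv_eq_right_inv (shiftInv_mul hM hz)

lemma unitary_entry_le (V : Matrix.unitaryGroup (Fin N) ℂ) (i j : Fin N) :
    ‖(V : Matrix (Fin N) (Fin N) ℂ) i j‖ ≤ 1 := by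
  have h1 : (star (V : Matrix (Fin N) (Fin N) ℂ) * V) j j = 1 := by
    rw [(Matrix.mem_unitaryGroup_iff').mp V.2]
    simp
  rw [Matrix.mul_apply] at h1
  have h2 : ∀ k, (star (V : Matrix (Fin N) (Fin N) ℂ)) j k * (V : Matrix (Fin N) (Fin N) ℂ) k j
      = ((Complex.normSq ((V : Matrix (Fin N) (Fin N) ℂ) k j) : ℝ) : ℂ) := by
    intro k
    rw [Matrix.star_apply]
    rw [show (star ((V : Matrix (Fin N) (Fin N) ℂ) k j)) = (starRingEnd ℂ) ((V : Matrix (Fin N) (Fin N) ℂ) k j) from rfl]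
    rw [mul_comm, Complex.mul_conj]
  simp_rw [h2] at h1
  rw [← Complex.ofReal_sum] at h1
  have h3 : (∑ k, Complex.normSq ((V : Matrix (Fin N) (Fin N) ℂ) k j)) = 1 := by
    exact_mod_cast h1
  have h4 : Complex.normSq ((V : Matrix (Fin N) (Fin N) ℂ) i j) ≤ 1 := by
    rw [← h3]
    exact Finset.single_le_sum (f := fun k => Complex.normSq ((V : Matrix (Fin N) (Fin N) ℂ) k j)) (fun k _ => Complex.normSq_nonneg _) (Finset.mem_univ i)
  have : ‖(V : Matrix (Fin N) (Fin N) ℂ) i j‖ = Real.sqrt (Complex.normSq ((V : Matrix (Fin N) (Fin N) ℂ) i j)) := by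
    rw [Complex.norm_def]
  rw [this]
  calc Real.sqrt (Complex.normSq ((V : Matrix (Fin N) (Fin N) ℂ) i j)) ≤ Real.sqrt 1 :=
        Real.sqrt_le_sqrt h4
    _ = 1 := Real.sqrt_one

lemma shiftInv_entry_le {M : Matrix (Fin N) (Fin N) ℂ} (hM : M.IsHermitian) {z : ℂ}
    (hz : z.im ≠ 0) (c d : Fin N) : ‖(M - z • 1)⁻¹ c d‖ ≤ N / |z.im| := by
  rw [inv_shift hM hz, shiftInv]
  set V : Matrix (Fin N) (Fin N) ℂ := (hM.eigenvectorUnitary : Matrix (Fin N) (Fin N) ℂ)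
  have hentry : ∀ i, (V * diagonal (fun i => ((hM.eigenvalues i : ℂ) - z)⁻¹)) c i
      = V c i * ((hM.eigenvalues i : ℂ) - z)⁻¹ := fun i => Matrix.mul_diagonal _ _ _ _
  rw [Matrix.mul_apply]
  calc ‖∑ i, (V * diagonal (fun i => ((hM.eigenvalues i : ℂ) - z)⁻¹)) c i * (star V) i d‖
      ≤ ∑ i, ‖(V * diagonal (fun i => ((hM.eigenvalues i : ℂ) - z)⁻¹)) c i * (star V) i d‖ :=
        norm_sum_le _ _
    _ ≤ ∑ _i : Fin N, 1 / |z.im| := by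
        apply Finset.sum_le_sum
        intro i _
        rw [hentry i, Matrix.star_apply, norm_mul, norm_mul, norm_star]
        have h1 : ‖V c i‖ ≤ 1 := unitary_entry_le _ _ _
        have h2 : ‖V d i‖ ≤ 1 := unitary_entry_le _ _ _
        have h3 : ‖((hM.eigenvalues i : ℂ) - z)⁻¹‖ ≤ 1 / |z.im| := by
          rw [norm_inv, one_div]
          apply inv_anti₀ (abs_pos.mpr hz)
          calc |z.im| = |((hM.eigenvalues i : ℂ) - z).im| := by simp
            _ ≤ ‖(hM.eigenvalues i : ℂ) - z‖ := Complex.abs_im_le_norm _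
            _ = ‖(hM.eigenvalues i : ℂ) - z‖ := rfl
        have hn : (0:ℝ) ≤ ‖((hM.eigenvalues i : ℂ) - z)⁻¹‖ := norm_nonneg _
        calc ‖V c i‖ * ‖((hM.eigenvalues i : ℂ) - z)⁻¹‖ * ‖V d i‖
            ≤ 1 * (1 / |z.im|) * 1 := by
              apply mul_le_mul _ h2 (norm_nonneg _) (by positivity)
              exact mul_le_mul h1 h3 hn zero_le_one
          _ = 1 / |z.im| := by ring
    _ = N / |z.im| := by
        rw [Finset.sum_const, Finset.card_univ, Fintype.card_fin, nsmul_eq_mul]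
        ring

section Herm
variable {A B : Matrix (Fin N) (Fin N) ℂ}

lemma isHermitian_conjByUnitary (hB : B.IsHermitian) (U : Matrix.unitaryGroup (Fin N) ℂ) :
    (conjByUnitary B U).IsHermitian := by
  simp [conjByUnitary, Matrix.IsHermitian, star_eq_conjTranspose, conjTranspose_mul,
    Matrix.mul_assoc, hB.eq]

lemma isHermitian_base (hA : A.IsHermitian) (hB : B.IsHermitian)
    (U : Matrix.unitaryGroup (Fin N) ℂ) : (A + conjByUnitary B U).IsHermitian :=
  hA.add (isHermitian_conjByUnitary hB U)

end Herm

/-- Entrywise bound predicate -/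
def eBnd {N : ℕ} (X : Matrix (Fin N) (Fin N) ℂ) (b : ℝ) : Prop :=
  ∀ p q : Fin N, ‖X p q‖ ≤ b

lemma eBnd_mul {X Y : Matrix (Fin N) (Fin N) ℂ} {a b : ℝ} (ha : 0 ≤ a) (hb : 0 ≤ b)
    (hX : eBnd X a) (hY : eBnd Y b) : eBnd (X * Y) (N * (a * b)) := by
  intro p q
  rw [Matrix.mul_apply]
  calc ‖∑ k, X p k * Y k q‖ ≤ ∑ k, ‖X p k * Y k q‖ := norm_sum_le _ _
    _ ≤ ∑ _k : Fin N, a * b := by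
        refine Finset.sum_le_sum fun k _ => ?_
        rw [norm_mul]
        exact mul_le_mul (hX p k) (hY k q) (norm_nonneg _) ha
    _ = N * (a * b) := by
        rw [Finset.sum_const, Finset.card_univ, Fintype.card_fin, nsmul_eq_mul]

lemma eBnd_sub {X Y : Matrix (Fin N) (Fin N) ℂ} {a b : ℝ}
    (hX : eBnd X a) (hY : eBnd Y b) : eBnd (X - Y) (a + b) := by
  intro p q
  calc ‖(X - Y) p q‖ = ‖X p q - Y p q‖ := rfl
    _ ≤ ‖X p q‖ + ‖Y p q‖ := norm_sub_le _ _
    _ ≤ a + b := add_le_add (hX p q) (hY p q)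

lemma eBnd_unitary (V : Matrix.unitaryGroup (Fin N) ℂ) :
    eBnd (V : Matrix (Fin N) (Fin N) ℂ) 1 := fun p q => unitary_entry_le V p q

lemma eBnd_self (X : Matrix (Fin N) (Fin N) ℂ) : eBnd X (∑ p, ∑ q, ‖X p q‖) := by
  intro p q
  calc ‖X p q‖ ≤ ∑ q', ‖X p q'‖ :=
        Finset.single_le_sum (f := fun q' => ‖X p q'‖) (fun _ _ => norm_nonneg _)
          (Finset.mem_univ q)
    _ ≤ ∑ p', ∑ q', ‖X p' q'‖ :=
        Finset.single_le_sum (f := fun p' => ∑ q', ‖X p' q'‖)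
          (fun _ _ => Finset.sum_nonneg fun _ _ => norm_nonneg _) (Finset.mem_univ p)

lemma eBnd_nonneg {X : Matrix (Fin N) (Fin N) ℂ} {b : ℝ} (h : eBnd X b) (hN : 0 < N) : 0 ≤ b :=
  le_trans (norm_nonneg _) (h ⟨0, hN⟩ ⟨0, hN⟩)

section Cont
variable (A B : Matrix (Fin N) (Fin N) ℂ) (z : ℂ)

lemma continuous_conjByUnitary : Continuous (fun U => conjByUnitary B U) := by
  unfold conjByUnitary
  exact ((continuous_subtype_val.matrix_mul continuous_const).matrix_mul
    continuous_subtype_val.star)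

lemma continuous_resolvent {A B : Matrix (Fin N) (Fin N) ℂ} (hA : A.IsHermitian)
    (hB : B.IsHermitian) {z : ℂ} (hz : z.im ≠ 0) :
    Continuous (fun U => resolventFreeSum A B z U) := by
  have hQ : Continuous (fun U : Matrix.unitaryGroup (Fin N) ℂ =>
      A + conjByUnitary B U - z • (1 : Matrix (Fin N) (Fin N) ℂ)) :=
    ((continuous_const.add (continuous_conjByUnitary B)).sub continuous_const)
  rw [continuous_iff_continuousAt]
  intro U
  refine ContinuousAt.comp ?_ hQ.continuousAt
  apply continuousAt_matrix_inv
  have hu : IsUnit (A + conjByUnitary B U - z • (1 : Matrix (Fin N) (Fin N) ℂ)).det :=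
    isUnit_det_shift (isHermitian_base hA hB U) hz
  rw [Ring.inverse_eq_inv']
  exact continuousAt_inv₀ (IsUnit.ne_zero hu)

end Cont

lemma eBnd_add {X Y : Matrix (Fin N) (Fin N) ℂ} {a b : ℝ}
    (hX : eBnd X a) (hY : eBnd Y b) : eBnd (X + Y) (a + b) := by
  intro p q
  calc ‖(X + Y) p q‖ = ‖X p q + Y p q‖ := rfl
    _ ≤ ‖X p q‖ + ‖Y p q‖ := norm_add_le _ _
    _ ≤ a + b := add_le_add (hX p q) (hY p q)

/-- Entry evaluation as a continuous linear map (over ℝ). -/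
noncomputable def entryCLM (c d : Fin N) : Matrix (Fin N) (Fin N) ℂ →L[ℝ] ℂ :=
  LinearMap.toContinuousLinearMap
    { toFun := fun X => X c d
      map_add' := fun _ _ => rfl
      map_smul' := fun _ _ => rfl }

@[simp] lemma entryCLM_apply (c d : Fin N) (X : Matrix (Fin N) (Fin N) ℂ) :
    entryCLM c d X = X c d := rfl

section Core
variable {A B : Matrix (Fin N) (Fin N) ℂ} {z : ℂ}
  {μ : Measure (Matrix.unitaryGroup (Fin N) ℂ)}

set_option maxHeartbeats 2000000 in
lemma key_skew [IsProbabilityMeasure μ] (hA : A.IsHermitian) (hB : B.IsHermitian)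
    (hz : z.im ≠ 0)
    (hHaar : ∀ V : Matrix.unitaryGroup (Fin N) ℂ, Measure.map (fun U => V * U) μ = μ)
    (M : Matrix (Fin N) (Fin N) ℂ) (hM : star M = -M) (c d : Fin N) :
    ∫ U, (resolventFreeSum A B z U *
        (M * conjByUnitary B U - conjByUnitary B U * M) * resolventFreeSum A B z U) c d ∂μ
      = 0 := by
  classical
  set Vt : ℝ → Matrix (Fin N) (Fin N) ℂ := fun t => exp (t • M) with hVtdef
  set Wt : ℝ → Matrix (Fin N) (Fin N) ℂ := fun t => exp (t • (-M)) with hWtdef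
  have hsm : ∀ t : ℝ, t • (-M) = -(t • M) := fun t => smul_neg t M
  have hVW : ∀ t, Vt t * Wt t = 1 := by
    intro t
    rw [hVtdef, hWtdef]
    simp only [hsm]
    rw [← Matrix.exp_add_of_commute _ _ ((Commute.refl (t • M)).neg_right), add_neg_cancel, exp_zero]
  have hWV : ∀ t, Wt t * Vt t = 1 := by
    intro t
    rw [hVtdef, hWtdef]
    simp only [hsm]
    rw [← Matrix.exp_add_of_commute _ _ ((Commute.refl (t • M)).neg_left), neg_add_cancel, exp_zero]
  have hstarV : ∀ t, star (Vt t) = Wt t := by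
    intro t
    rw [hVtdef, hWtdef, star_exp]
    congr 1
    rw [star_smul, star_trivial, hM, hsm]
  have hmem : ∀ t, Vt t ∈ Matrix.unitaryGroup (Fin N) ℂ := by
    intro t
    rw [Matrix.mem_unitaryGroup_iff, hstarV]
    exact hVW t
  set Vu : ℝ → Matrix.unitaryGroup (Fin N) ℂ := fun t => ⟨Vt t, hmem t⟩ with hVudef
  set P : ℝ → Matrix.unitaryGroup (Fin N) ℂ → Matrix (Fin N) (Fin N) ℂ :=
    fun t U => A + Vt t * conjByUnitary B U * Wt t - z • 1 with hPdef
  have hPconj : ∀ t U, P t U = A + conjByUnitary B (Vu t * U) - z • 1 := by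
    intro t U
    have h1 : conjByUnitary B (Vu t * U) = Vt t * conjByUnitary B U * Wt t := by
      show (Vt t * (U : Matrix (Fin N) (Fin N) ℂ)) * B * star (Vt t * (U : Matrix (Fin N) (Fin N) ℂ)) = _
      rw [StarMul.star_mul, hstarV, conjByUnitary]
      simp only [Matrix.mul_assoc]
    rw [hPdef, h1]
  have hPunit : ∀ t U, IsUnit (P t U) := by
    intro t U
    rw [hPconj]
    exact (Matrix.isUnit_iff_isUnit_det _).2 (isUnit_det_shift (isHermitian_base hA hB _) hz)
  set D : ℝ → Matrix.unitaryGroup (Fin N) ℂ → Matrix (Fin N) (Fin N) ℂ :=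
    fun t U => Vt t * M * conjByUnitary B U * Wt t
      + Vt t * conjByUnitary B U * (Wt t * -M) with hDdef
  have hPder : ∀ t U, HasDerivAt (fun s => P s U) (D t U) t := by
    intro t U
    have h1 : HasDerivAt (fun s => Vt s * conjByUnitary B U)
        (exp (t • M) * M * conjByUnitary B U) t :=
      (hasDerivAt_exp_smul_const M t).mul_const _
    have h2 : HasDerivAt Wt (exp (t • (-M)) * -M) t := hasDerivAt_exp_smul_const (-M) t
    have h3 := h1.mul h2
    exact (h3.const_add A).sub_const (z • 1)
  set R : ℝ → Matrix.unitaryGroup (Fin N) ℂ → Matrix (Fin N) (Fin N) ℂ :=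
    fun t U => Ring.inverse (P t U) with hRdef
  have hRder : ∀ t U, HasDerivAt (fun s => R s U) (-(R t U * D t U * R t U)) t := by
    intro t U
    have hu := hPunit t U
    have h := hasFDerivAt_ringInverse (𝕜 := ℝ) hu.unit
    rw [hu.unit_spec] at h
    have h2 := h.comp_hasDerivAt t (hPder t U)
    have h3 : (-(ContinuousLinearMap.mulLeftRight ℝ (Matrix (Fin N) (Fin N) ℂ)
        ↑hu.unit⁻¹ ↑hu.unit⁻¹)) (D t U) = -(R t U * D t U * R t U) := by
      rw [ContinuousLinearMap.neg_apply, ContinuousLinearMap.mulLeftRight_apply]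
      have : (↑hu.unit⁻¹ : Matrix (Fin N) (Fin N) ℂ) = R t U := by
        rw [hRdef, ← Ring.inverse_unit hu.unit, hu.unit_spec]
      rw [this]
    rw [h3] at h2
    exact h2
  -- entrywise functions
  set F : ℝ → Matrix.unitaryGroup (Fin N) ℂ → ℂ := fun t U => R t U c d with hFdef
  set F' : ℝ → Matrix.unitaryGroup (Fin N) ℂ → ℂ :=
    fun t U => (-(R t U * D t U * R t U)) c d with hF'def
  have hFder : ∀ t U, HasDerivAt (fun s => F s U) (F' t U) t := by
    intro t U
    exact (entryCLM c d).hasFDerivAt.comp_hasDerivAt t (hRder t U)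
  -- identification with resolvent at shifted point
  have hRres : ∀ t U, R t U = resolventFreeSum A B z (Vu t * U) := by
    intro t U
    rw [hRdef]
    show Ring.inverse (P t U) = _
    rw [hPconj, resolventFreeSum, Matrix.nonsing_inv_eq_ringInverse]
  -- continuity facts
  have hgcont : Continuous (fun U : Matrix.unitaryGroup (Fin N) ℂ =>
      resolventFreeSum A B z U c d) := (continuous_resolvent hA hB hz).matrix_elem c d
  have hmulcont : ∀ t, Continuous (fun U : Matrix.unitaryGroup (Fin N) ℂ => Vu t * U) := by
    intro t
    apply Continuous.subtype_mk
    exact continuous_const.matrix_mul continuous_subtype_val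
  have hFg : ∀ t U, F t U = resolventFreeSum A B z (Vu t * U) c d := by
    intro t U
    show R t U c d = _
    rw [hRres]
  -- invariance: the integral of F t is constant in t
  have hconst : ∀ t, ∫ U, F t U ∂μ = ∫ U, resolventFreeSum A B z U c d ∂μ := by
    intro t
    have h1 : ∫ U, resolventFreeSum A B z U c d ∂(Measure.map (fun U => Vu t * U) μ)
        = ∫ U, resolventFreeSum A B z (Vu t * U) c d ∂μ := by
      apply integral_map ((hmulcont t).measurable.aemeasurable)
      rw [hHaar]
      exact hgcont.aestronglyMeasurable
    rw [hHaar] at h1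
    calc ∫ U, F t U ∂μ = ∫ U, resolventFreeSum A B z (Vu t * U) c d ∂μ :=
          integral_congr_ae (Filter.Eventually.of_forall fun U => hFg t U)
      _ = ∫ U, resolventFreeSum A B z U c d ∂μ := h1.symm
  -- bounds
  have hN0 : (0:ℝ) ≤ N / |z.im| := div_nonneg (Nat.cast_nonneg N) (abs_nonneg _)
  set bB : ℝ := ∑ p, ∑ q, ‖B p q‖ with hbBdef
  set bM : ℝ := ∑ p, ∑ q, ‖M p q‖ with hbMdef
  have hbB0 : 0 ≤ bB :=
    Finset.sum_nonneg fun _ _ => Finset.sum_nonneg fun _ _ => norm_nonneg _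
  have hbM0 : 0 ≤ bM :=
    Finset.sum_nonneg fun _ _ => Finset.sum_nonneg fun _ _ => norm_nonneg _
  have hBB : eBnd B bB := eBnd_self B
  have hMB : eBnd M bM := eBnd_self M
  have hMB' : eBnd (-M) bM := by
    intro p q
    rw [Matrix.neg_apply, norm_neg]
    exact hMB p q
  have hstarUB : ∀ (X : Matrix.unitaryGroup (Fin N) ℂ),
      eBnd (star (X : Matrix (Fin N) (Fin N) ℂ)) 1 := by
    intro X p q
    rw [Matrix.star_apply, norm_star]
    exact unitary_entry_le X q p
  set bC : ℝ := N * ((N * (1 * bB)) * 1) with hbCdef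
  have hbC0 : 0 ≤ bC := by positivity
  have hCB : ∀ U', eBnd (conjByUnitary B U') bC := by
    intro U'
    exact eBnd_mul (by positivity) zero_le_one
      (eBnd_mul zero_le_one hbB0 (eBnd_unitary U') hBB) (hstarUB U')
  have hVtB : ∀ t, eBnd (Vt t) 1 := fun t => eBnd_unitary (Vu t)
  have hWtB : ∀ t, eBnd (Wt t) 1 := by
    intro t
    rw [← hstarV t]
    exact hstarUB (Vu t)
  set bD : ℝ := N * ((N * ((N * (1 * bM)) * bC)) * 1) + N * ((N * (1 * bC)) * (N * (1 * bM)))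
    with hbDdef
  have hbD0 : 0 ≤ bD := by positivity
  have hDB : ∀ t U, eBnd (D t U) bD := by
    intro t U
    refine eBnd_add ?_ ?_
    · exact eBnd_mul (by positivity) zero_le_one
        (eBnd_mul (by positivity) hbC0
          (eBnd_mul zero_le_one hbM0 (hVtB t) hMB) (hCB U)) (hWtB t)
    · exact eBnd_mul (by positivity) (by positivity)
        (eBnd_mul zero_le_one hbC0 (hVtB t) (hCB U))
        (eBnd_mul zero_le_one hbM0 (hWtB t) hMB')
  have hRB : ∀ t U, eBnd (R t U) (N / |z.im|) := by
    intro t U p q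
    rw [hRres]
    show ‖(A + conjByUnitary B (Vu t * U) - z • 1)⁻¹ p q‖ ≤ _
    exact shiftInv_entry_le (isHermitian_base hA hB _) hz p q
  set bK : ℝ := N * ((N * ((N / |z.im|) * bD)) * (N / |z.im|)) with hbKdef
  have hKB : ∀ t U, ‖F' t U‖ ≤ bK := by
    intro t U
    show ‖(-(R t U * D t U * R t U)) c d‖ ≤ bK
    rw [Matrix.neg_apply, norm_neg]
    exact eBnd_mul (by positivity) hN0
      (eBnd_mul hN0 hbD0 (hRB t U) (hDB t U)) (hRB t U) c d
  -- measurability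
  have hFmeas : ∀ t, AEStronglyMeasurable (F t) μ := by
    intro t
    have hc : Continuous (fun U => resolventFreeSum A B z (Vu t * U) c d) :=
      ((continuous_resolvent hA hB hz).matrix_elem c d).comp (hmulcont t)
    have : F t = fun U => resolventFreeSum A B z (Vu t * U) c d := funext (hFg t)
    rw [this]
    exact hc.aestronglyMeasurable
  have hFint : Integrable (F 0) μ := by
    refine Integrable.mono' (integrable_const (N / |z.im|)) (hFmeas 0) ?_
    exact Filter.Eventually.of_forall fun U => hRB 0 U c d
  have hRcont : Continuous (fun U => R 0 U) := by
    have : (fun U => R 0 U) = fun U => resolventFreeSum A B z (Vu 0 * U) := funext (hRres 0)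
    rw [this]
    exact (continuous_resolvent hA hB hz).comp (hmulcont 0)
  have hDcont : Continuous (fun U => D 0 U) := by
    apply Continuous.add
    · exact (continuous_const.matrix_mul (continuous_conjByUnitary B)).matrix_mul
        continuous_const
    · exact (continuous_const.matrix_mul (continuous_conjByUnitary B)).matrix_mul
        continuous_const
  have hF'meas : AEStronglyMeasurable (F' 0) μ := by
    have hc : Continuous (F' 0) :=
      (((hRcont.matrix_mul hDcont).matrix_mul hRcont).neg).matrix_elem c d
    exact hc.aestronglyMeasurable
  -- dominated-convergence differentiation under the integral
  have hmain := (hasDerivAt_integral_of_dominated_loc_of_deriv_le (μ := μ) (F := F)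
    (F' := F') (x₀ := 0) (bound := fun _ => bK) (Metric.ball_mem_nhds 0 zero_lt_one)
    (Filter.Eventually.of_forall hFmeas) hFint hF'meas
    (Filter.Eventually.of_forall fun U => fun t _ => hKB t U)
    (integrable_const bK)
    (Filter.Eventually.of_forall fun U => fun t _ => hFder t U)).2
  have hconstfun : (fun t => ∫ U, F t U ∂μ)
      = fun _ => ∫ U, resolventFreeSum A B z U c d ∂μ := funext hconst
  rw [hconstfun] at hmain
  have h0 : ∫ U, F' 0 U ∂μ = 0 := ((hasDerivAt_const (0:ℝ) _).unique hmain).symm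
  -- identify F' 0
  have hV0 : Vt 0 = 1 := by
    show exp ((0:ℝ) • M) = 1
    rw [zero_smul, exp_zero]
  have hW0 : Wt 0 = 1 := by
    show exp ((0:ℝ) • (-M)) = 1
    rw [zero_smul, exp_zero]
  have hVu0 : Vu 0 = 1 := Subtype.ext hV0
  have hR0 : ∀ U, R 0 U = resolventFreeSum A B z U := by
    intro U
    rw [hRres, hVu0, one_mul]
  have hD0 : ∀ U, D 0 U = M * conjByUnitary B U - conjByUnitary B U * M := by
    intro U
    show Vt 0 * M * conjByUnitary B U * Wt 0 + Vt 0 * conjByUnitary B U * (Wt 0 * -M) = _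
    rw [hV0, hW0, Matrix.one_mul, Matrix.one_mul, Matrix.mul_one, Matrix.one_mul,
      Matrix.mul_neg, ← sub_eq_add_neg]
  have hid : ∫ U, F' 0 U ∂μ = ∫ U, (-(resolventFreeSum A B z U *
      (M * conjByUnitary B U - conjByUnitary B U * M) * resolventFreeSum A B z U)) c d ∂μ := by
    refine integral_congr_ae (Filter.Eventually.of_forall fun U => ?_)
    show (-(R 0 U * D 0 U * R 0 U)) c d = _
    rw [hR0, hD0]
  rw [hid] at h0
  simp only [Matrix.neg_apply] at h0
  rw [integral_neg] at h0
  exact neg_eq_zero.mp h0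




lemma res_eBnd (hA : A.IsHermitian) (hB : B.IsHermitian) (hz : z.im ≠ 0) (U : Matrix.unitaryGroup (Fin N) ℂ) :
    eBnd (resolventFreeSum A B z U) (N / |z.im|) := by
  intro p q
  show ‖(A + conjByUnitary B U - z • 1)⁻¹ p q‖ ≤ _
  exact shiftInv_entry_le (isHermitian_base hA hB _) hz p q

lemma conj_eBnd (B : Matrix (Fin N) (Fin N) ℂ) (U : Matrix.unitaryGroup (Fin N) ℂ) :
    eBnd (conjByUnitary B U) (N * ((N * (1 * (∑ p, ∑ q, ‖B p q‖))) * 1)) := by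
  have hbB0 : 0 ≤ ∑ p, ∑ q, ‖B p q‖ :=
    Finset.sum_nonneg fun _ _ => Finset.sum_nonneg fun _ _ => norm_nonneg _
  have hstarUB : eBnd (star (U : Matrix (Fin N) (Fin N) ℂ)) 1 := by
    intro p q
    rw [Matrix.star_apply, norm_star]
    exact unitary_entry_le U q p
  exact eBnd_mul (by positivity) zero_le_one
    (eBnd_mul zero_le_one hbB0 (eBnd_unitary U) (eBnd_self B)) hstarUB

set_option maxHeartbeats 2000000 in
lemma integrable_entry [IsProbabilityMeasure μ] (hA : A.IsHermitian) (hB : B.IsHermitian)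
    (hz : z.im ≠ 0) (Y : Matrix (Fin N) (Fin N) ℂ) (c d : Fin N) :
    Integrable (fun U => (resolventFreeSum A B z U *
      (Y * conjByUnitary B U - conjByUnitary B U * Y) * resolventFreeSum A B z U) c d) μ := by
  have hG := continuous_resolvent hA hB hz
  have hC := continuous_conjByUnitary (N := N) B
  have hcont : Continuous (fun U => (resolventFreeSum A B z U *
      (Y * conjByUnitary B U - conjByUnitary B U * Y) * resolventFreeSum A B z U) c d) :=
    ((hG.matrix_mul ((continuous_const.matrix_mul hC).sub
      (hC.matrix_mul continuous_const))).matrix_mul hG).matrix_elem c d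
  set bB : ℝ := ∑ p, ∑ q, ‖B p q‖ with hbBdef
  have hbB0 : 0 ≤ bB := Finset.sum_nonneg fun _ _ => Finset.sum_nonneg fun _ _ => norm_nonneg _
  set bY : ℝ := ∑ p, ∑ q, ‖Y p q‖ with hbYdef
  have hbY0 : 0 ≤ bY := Finset.sum_nonneg fun _ _ => Finset.sum_nonneg fun _ _ => norm_nonneg _
  set bC : ℝ := N * ((N * (1 * bB)) * 1) with hbCdef
  have hbC0 : 0 ≤ bC := by positivity
  have hN0 : (0:ℝ) ≤ N / |z.im| := div_nonneg (Nat.cast_nonneg N) (abs_nonneg _)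
  refine Integrable.mono'
    (integrable_const ((N:ℝ) * ((N * ((N / |z.im|) * (N * (bY * bC) + N * (bC * bY))))
      * (N / |z.im|)))) hcont.aestronglyMeasurable ?_
  refine Filter.Eventually.of_forall fun U => ?_
  have hmid : eBnd (Y * conjByUnitary B U - conjByUnitary B U * Y)
      (N * (bY * bC) + N * (bC * bY)) :=
    eBnd_sub (eBnd_mul hbY0 hbC0 (eBnd_self Y) (conj_eBnd B U))
      (eBnd_mul hbC0 hbY0 (conj_eBnd B U) (eBnd_self Y))
  exact eBnd_mul (by positivity) hN0
    (eBnd_mul hN0 (by positivity) (res_eBnd hA hB hz U) hmid) (res_eBnd hA hB hz U) c d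

set_option maxHeartbeats 2000000 in
lemma key_general [IsProbabilityMeasure μ] (hA : A.IsHermitian) (hB : B.IsHermitian)
    (hz : z.im ≠ 0)
    (hHaar : ∀ V : Matrix.unitaryGroup (Fin N) ℂ, Measure.map (fun U => V * U) μ = μ)
    (Y : Matrix (Fin N) (Fin N) ℂ) (c d : Fin N) :
    ∫ U, (resolventFreeSum A B z U *
        (Y * conjByUnitary B U - conjByUnitary B U * Y) * resolventFreeSum A B z U) c d ∂μ
      = 0 := by
  set S₁ : Matrix (Fin N) (Fin N) ℂ := (2⁻¹ : ℂ) • (Y - Yᴴ) with hS₁def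
  set S₂ : Matrix (Fin N) (Fin N) ℂ := (2⁻¹ : ℂ) • (Y + Yᴴ) with hS₂def
  set T₂ : Matrix (Fin N) (Fin N) ℂ := Complex.I • S₂ with hT₂def
  have hskew₁ : star S₁ = -S₁ := by
    rw [hS₁def, star_smul, star_sub]
    rw [show star (Y : Matrix (Fin N) (Fin N) ℂ) = Yᴴ from rfl,
      show star (Yᴴ : Matrix (Fin N) (Fin N) ℂ) = Y from Matrix.conjTranspose_conjTranspose Y]
    rw [show (star (2⁻¹ : ℂ)) = (2⁻¹ : ℂ) by simp]
    rw [← smul_neg, neg_sub]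
  have hherm₂ : star S₂ = S₂ := by
    rw [hS₂def, star_smul, star_add]
    rw [show star (Y : Matrix (Fin N) (Fin N) ℂ) = Yᴴ from rfl,
      show star (Yᴴ : Matrix (Fin N) (Fin N) ℂ) = Y from Matrix.conjTranspose_conjTranspose Y]
    rw [show (star (2⁻¹ : ℂ)) = (2⁻¹ : ℂ) by simp, add_comm]
  have hskew₂ : star T₂ = -T₂ := by
    rw [hT₂def, star_smul, hherm₂, show (star Complex.I) = -Complex.I by simp, neg_smul]
  have hYdec : Y = S₁ + (-Complex.I) • T₂ := by
    rw [hT₂def, hS₁def, hS₂def, smul_smul]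
    rw [show (-Complex.I * Complex.I) = 1 by simp [Complex.I_mul_I]]
    rw [one_smul, ← smul_add]
    rw [show Y - Yᴴ + (Y + Yᴴ) = (2 : ℂ) • Y by
      rw [two_smul]; abel]
    rw [smul_smul]
    norm_num
  clear_value S₁ S₂ T₂
  have hmat : ∀ U, (resolventFreeSum A B z U *
      (Y * conjByUnitary B U - conjByUnitary B U * Y) * resolventFreeSum A B z U) c d
      = (resolventFreeSum A B z U *
          (S₁ * conjByUnitary B U - conjByUnitary B U * S₁) * resolventFreeSum A B z U) c d
        + (-Complex.I) * ((resolventFreeSum A B z U *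
          (T₂ * conjByUnitary B U - conjByUnitary B U * T₂) * resolventFreeSum A B z U) c d) := by
    intro U
    have : resolventFreeSum A B z U *
        (Y * conjByUnitary B U - conjByUnitary B U * Y) * resolventFreeSum A B z U
        = resolventFreeSum A B z U *
            (S₁ * conjByUnitary B U - conjByUnitary B U * S₁) * resolventFreeSum A B z U
          + (-Complex.I) • (resolventFreeSum A B z U *
            (T₂ * conjByUnitary B U - conjByUnitary B U * T₂) * resolventFreeSum A B z U) := by
      conv_lhs => rw [hYdec]
      rw [add_mul, Matrix.mul_add, smul_mul_assoc, mul_smul_comm]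
      rw [show ∀ (X W : Matrix (Fin N) (Fin N) ℂ) (a : ℂ) (Z W' : Matrix (Fin N) (Fin N) ℂ),
        X + a • Z - (W + a • W') = (X - W) + a • (Z - W') from by
          intros; rw [smul_sub]; abel]
      rw [Matrix.mul_add, Matrix.add_mul, mul_smul_comm, smul_mul_assoc]
    rw [this, Matrix.add_apply, Matrix.smul_apply, smul_eq_mul]
  rw [integral_congr_ae (Filter.Eventually.of_forall hmat)]
  rw [integral_add (integrable_entry hA hB hz S₁ c d)
    ((integrable_entry hA hB hz T₂ c d).const_mul _)]
  rw [integral_const_mul]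
  rw [key_skew hA hB hz hHaar S₁ hskew₁ c d, key_skew hA hB hz hHaar T₂ hskew₂ c d]
  simp

end Core

lemma triple_entry (X Z : Matrix (Fin N) (Fin N) ℂ) (a b p q : Fin N) :
    (X * Matrix.single a b (1:ℂ) * Z) p q = X p a * Z b q := by
  rw [Matrix.mul_assoc, Matrix.mul_apply]
  have : ∀ l, (Matrix.single a b (1:ℂ) * Z) l q = if a = l then Z b q else 0 := by
    intro l
    rw [Matrix.mul_apply]
    simp [Matrix.single, Matrix.of_apply, ite_and]
  simp_rw [this]
  simp [mul_ite, Finset.sum_ite_eq]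

lemma sum_ward (Gm Cm : Matrix (Fin N) (Fin N) ℂ) (j : Fin N) :
    ∑ a : Fin N, (Gm * (Matrix.single a j (1:ℂ) * Cm - Cm * Matrix.single a j (1:ℂ)) * Gm) a j
      = Matrix.trace Gm * (Cm * Gm) j j - Matrix.trace (Gm * Cm) * Gm j j := by
  have hterm : ∀ a, (Gm * (Matrix.single a j (1:ℂ) * Cm - Cm * Matrix.single a j (1:ℂ)) * Gm) a j
      = Gm a a * (Cm * Gm) j j - (Gm * Cm) a a * Gm j j := by
    intro a
    rw [Matrix.mul_sub, Matrix.sub_mul, Matrix.sub_apply]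
    congr 1
    · have h : Gm * (Matrix.single a j (1:ℂ) * Cm) * Gm
          = Gm * Matrix.single a j (1:ℂ) * (Cm * Gm) := by
        simp only [Matrix.mul_assoc]
      rw [h, triple_entry]
    · have h : Gm * (Cm * Matrix.single a j (1:ℂ)) * Gm
          = (Gm * Cm) * Matrix.single a j (1:ℂ) * Gm := by
        simp only [Matrix.mul_assoc]
      rw [h, triple_entry]
  rw [Finset.sum_congr rfl fun a _ => hterm a, Finset.sum_sub_distrib,
    ← Finset.sum_mul, ← Finset.sum_mul]
  rfl

section Final
variable {A B : Matrix (Fin N) (Fin N) ℂ} {z : ℂ}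
  {μ : Measure (Matrix.unitaryGroup (Fin N) ℂ)}

set_option maxHeartbeats 2000000 in
lemma integrable_f1 [IsProbabilityMeasure μ] (hA : A.IsHermitian) (hB : B.IsHermitian)
    (hz : z.im ≠ 0) (j : Fin N) :
    Integrable (fun U => Matrix.trace (resolventFreeSum A B z U) *
      (conjByUnitary B U * resolventFreeSum A B z U) j j) μ := by
  have hG := continuous_resolvent hA hB hz
  have hC := continuous_conjByUnitary (N := N) B
  have hcont : Continuous (fun U => Matrix.trace (resolventFreeSum A B z U) *
      (conjByUnitary B U * resolventFreeSum A B z U) j j) :=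
    (hG.matrix_trace).mul ((hC.matrix_mul hG).matrix_elem j j)
  set bB : ℝ := ∑ p, ∑ q, ‖B p q‖ with hbBdef
  have hbB0 : 0 ≤ bB := Finset.sum_nonneg fun _ _ => Finset.sum_nonneg fun _ _ => norm_nonneg _
  set bC : ℝ := N * ((N * (1 * bB)) * 1) with hbCdef
  have hbC0 : 0 ≤ bC := by positivity
  have hN0 : (0:ℝ) ≤ N / |z.im| := div_nonneg (Nat.cast_nonneg N) (abs_nonneg _)
  refine Integrable.mono'
    (integrable_const ((N * (N / |z.im|)) * (N * (bC * (N / |z.im|)))))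
    hcont.aestronglyMeasurable (Filter.Eventually.of_forall fun U => ?_)
  rw [norm_mul]
  refine mul_le_mul ?_ ?_ (norm_nonneg _) (by positivity)
  · calc ‖Matrix.trace (resolventFreeSum A B z U)‖
        ≤ ∑ a, ‖resolventFreeSum A B z U a a‖ := norm_sum_le _ _
      _ ≤ ∑ _a : Fin N, (N / |z.im|) := Finset.sum_le_sum fun a _ => res_eBnd hA hB hz U a a
      _ = N * (N / |z.im|) := by
          rw [Finset.sum_const, Finset.card_univ, Fintype.card_fin, nsmul_eq_mul]
  · exact eBnd_mul hbC0 hN0 (conj_eBnd B U) (res_eBnd hA hB hz U) j j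

set_option maxHeartbeats 2000000 in
lemma integrable_f2 [IsProbabilityMeasure μ] (hA : A.IsHermitian) (hB : B.IsHermitian)
    (hz : z.im ≠ 0) (j : Fin N) :
    Integrable (fun U => Matrix.trace (resolventFreeSum A B z U * conjByUnitary B U) *
      resolventFreeSum A B z U j j) μ := by
  have hG := continuous_resolvent hA hB hz
  have hC := continuous_conjByUnitary (N := N) B
  have hcont : Continuous (fun U => Matrix.trace (resolventFreeSum A B z U * conjByUnitary B U) *
      resolventFreeSum A B z U j j) :=
    ((hG.matrix_mul hC).matrix_trace).mul (hG.matrix_elem j j)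
  set bB : ℝ := ∑ p, ∑ q, ‖B p q‖ with hbBdef
  have hbB0 : 0 ≤ bB := Finset.sum_nonneg fun _ _ => Finset.sum_nonneg fun _ _ => norm_nonneg _
  set bC : ℝ := N * ((N * (1 * bB)) * 1) with hbCdef
  have hbC0 : 0 ≤ bC := by positivity
  have hN0 : (0:ℝ) ≤ N / |z.im| := div_nonneg (Nat.cast_nonneg N) (abs_nonneg _)
  refine Integrable.mono'
    (integrable_const ((N * (N * ((N / |z.im|) * bC))) * (N / |z.im|)))
    hcont.aestronglyMeasurable (Filter.Eventually.of_forall fun U => ?_)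
  rw [norm_mul]
  refine mul_le_mul ?_ (res_eBnd hA hB hz U j j) (norm_nonneg _) (by positivity)
  calc ‖Matrix.trace (resolventFreeSum A B z U * conjByUnitary B U)‖
      ≤ ∑ a, ‖(resolventFreeSum A B z U * conjByUnitary B U) a a‖ := norm_sum_le _ _
    _ ≤ ∑ _a : Fin N, (N * ((N / |z.im|) * bC)) := Finset.sum_le_sum fun a _ =>
        eBnd_mul hN0 hbC0 (res_eBnd hA hB hz U) (conj_eBnd B U) a a
    _ = N * (N * ((N / |z.im|) * bC)) := by
        rw [Finset.sum_const, Finset.card_univ, Fintype.card_fin, nsmul_eq_mul]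

end Final

set_option maxHeartbeats 2000000 in
/-- Ward identity from left-invariance of Haar measure on the unitary group:
`E[(1/N) Tr(B̃ G(z)) · G(z)_{jj}] = E[(1/N) Tr G(z) · (B̃ G(z))_{jj}]`. -/
theorem ward_identity_haar_unitary {N : ℕ} (A B : Matrix (Fin N) (Fin N) ℂ)
    (hA : A.IsHermitian) (hB : B.IsHermitian)
    (μ : Measure (Matrix.unitaryGroup (Fin N) ℂ)) [IsProbabilityMeasure μ]
    (hHaar : ∀ V : Matrix.unitaryGroup (Fin N) ℂ,
      Measure.map (fun U => V * U) μ = μ)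
    (z : ℂ) (hz : 0 < z.im) (j : Fin N) :
    ∫ U, ((1 / (N : ℂ)) * Matrix.trace (conjByUnitary B U * resolventFreeSum A B z U)) *
        (resolventFreeSum A B z U j j) ∂μ
      = ∫ U, ((1 / (N : ℂ)) * Matrix.trace (resolventFreeSum A B z U)) *
        ((conjByUnitary B U * resolventFreeSum A B z U) j j) ∂μ := by
  have him : z.im ≠ 0 := hz.ne'
  have h0 : ∑ a : Fin N, ∫ U, (resolventFreeSum A B z U *
      (Matrix.single a j (1:ℂ) * conjByUnitary B U -
        conjByUnitary B U * Matrix.single a j (1:ℂ)) * resolventFreeSum A B z U) a j ∂μ = 0 :=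
    Finset.sum_eq_zero fun a _ => key_general hA hB him hHaar _ a j
  rw [← integral_finset_sum _ (fun a _ => integrable_entry hA hB him _ a j)] at h0
  have h1 : ∫ U, (Matrix.trace (resolventFreeSum A B z U) *
      (conjByUnitary B U * resolventFreeSum A B z U) j j
      - Matrix.trace (resolventFreeSum A B z U * conjByUnitary B U) *
        resolventFreeSum A B z U j j) ∂μ = 0 := by
    rw [← h0]
    exact integral_congr_ae (Filter.Eventually.of_forall fun U =>
      (sum_ward (resolventFreeSum A B z U) (conjByUnitary B U) j).symm)
  rw [integral_sub (integrable_f1 hA hB him j) (integrable_f2 hA hB him j)] at h1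
  have h2 : ∫ U, Matrix.trace (resolventFreeSum A B z U) *
        (conjByUnitary B U * resolventFreeSum A B z U) j j ∂μ
      = ∫ U, Matrix.trace (resolventFreeSum A B z U * conjByUnitary B U) *
        resolventFreeSum A B z U j j ∂μ := sub_eq_zero.mp h1
  calc ∫ U, ((1 / (N : ℂ)) * Matrix.trace (conjByUnitary B U * resolventFreeSum A B z U)) *
        (resolventFreeSum A B z U j j) ∂μ
      = ∫ U, (1 / (N : ℂ)) * (Matrix.trace (resolventFreeSum A B z U * conjByUnitary B U) *
          resolventFreeSum A B z U j j) ∂μ := by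
        exact integral_congr_ae (Filter.Eventually.of_forall fun U => by
          simp only [Matrix.trace_mul_comm (conjByUnitary B U) (resolventFreeSum A B z U),
            mul_assoc])
    _ = (1 / (N : ℂ)) * ∫ U, Matrix.trace (resolventFreeSum A B z U * conjByUnitary B U) *
          resolventFreeSum A B z U j j ∂μ := integral_const_mul _ _
    _ = (1 / (N : ℂ)) * ∫ U, Matrix.trace (resolventFreeSum A B z U) *
          (conjByUnitary B U * resolventFreeSum A B z U) j j ∂μ := by rw [h2]
    _ = ∫ U, ((1 / (N : ℂ)) * Matrix.trace (resolventFreeSum A B z U)) *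
          ((conjByUnitary B U * resolventFreeSum A B z U) j j) ∂μ := by
        rw [← integral_const_mul]
        exact integral_congr_ae (Filter.Eventually.of_forall fun U => by
          simp only [mul_assoc])
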